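/- For every n ∈ ℕ, Σ_{k=0}^{2n} Σ_{j=0}^{n} ((−2/3)_k / k!) · C(k,j) · 2^{k−j} · C(3n−k, n) · C(2n−k, n−j) = 27^n · (1/9)_n (4/9)_n (7/9)_n / ((2/3)_n · (n!)²). (This expresses, in coefficient form, that the diagonal of (1−x−2y)^{2/3}/(1−x−y−z) equals ₃F₂([1/9, 4/9, 7/9], [2/3, 1], 27x).) -/

import Mathlib

open Finset Polynomial

private noncomputable def pe (k : ℕ) (x : ℚ) : ℚ := Polynomial.eval x (ascPochhammer ℚ k)

private lemma pe_zero (x : ℚ) : pe 0 x = 1 := by simp [pe]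

private lemma pe_succ (k : ℕ) (x : ℚ) : pe (k+1) x = pe k x * (x + k) :=
  ascPochhammer_succ_eval k x

private lemma pe_succ_left (k : ℕ) (x : ℚ) : pe (k+1) x = x * pe k (x+1) := by
  simp [pe, ascPochhammer_succ_left, eval_comp]

private lemma pe_add (a b : ℕ) (x : ℚ) : pe (a+b) x = pe a x * pe b (x + a) := by
  have := congrArg (Polynomial.eval x) (ascPochhammer_mul ℚ a b)
  simpa [pe, eval_comp] using this.symm

private lemma pe_pos {x : ℚ} (h : 0 < x) (k : ℕ) : 0 < pe k x :=
  ascPochhammer_pos k x h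

private lemma hC2 (i m : ℕ) : (m+1) * (i+m+1).choose i = (i+m+1) * (i+m).choose i := by
  have h := Nat.add_one_mul_choose_eq (i+m) m
  have e1 : (i+m).choose i = (i+m).choose m := Nat.choose_symm_add
  have e2 : (i+m+1).choose i = (i+m+1).choose (m+1) := by
    have : i+(m+1) = i+m+1 := by omega
    rw [← this]; exact Nat.choose_symm_add
  rw [e1, e2]
  linarith [h]

private noncomputable def Ff (n i : ℕ) : ℚ :=
  ((n.choose i : ℕ) : ℚ) * pe i (-(2/3)) * pe (n-i) ((n:ℚ)+1+(-(2/3))+i)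

private noncomputable def gg (n i : ℕ) : ℚ :=
  (((n.choose i : ℕ) : ℚ) - ((n+1).choose i : ℕ)) * pe i (-(2/3))
    * pe (n+1-i) ((n:ℚ)+1+(-(2/3))+i)

private lemma cert_aux (i m : ℕ) :
    (((i+m+1).choose i : ℕ) : ℚ) * pe i (-(2/3)) * pe (m+1) ((i:ℚ)+m+2+(-(2/3))+i)
      - 2*((-(2/3))+2*((i:ℚ)+m)+1) * ((i+m).choose i : ℕ) * pe i (-(2/3))
          * pe m ((i:ℚ)+m+1+(-(2/3))+i)
    = ((((i+m).choose (i+1) : ℕ) : ℚ) - ((i+m+1).choose (i+1) : ℕ)) * pe (i+1) (-(2/3))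
          * pe m ((i:ℚ)+m+2+(-(2/3))+i)
      - ((((i+m).choose i : ℕ) : ℚ) - ((i+m+1).choose i : ℕ)) * pe i (-(2/3))
          * pe (m+1) ((i:ℚ)+m+1+(-(2/3))+i) := by
  set Y : ℚ := (i:ℚ)+m+2+(-(2/3))+i with hYdef
  have hY1 : (i:ℚ)+m+1+(-(2/3))+i = Y - 1 := by rw [hYdef]; ring
  rw [hY1]
  have h1 : pe (m+1) Y = pe m Y * (Y + m) := pe_succ m Y
  have h2 : pe (m+1) (Y-1) = (Y-1) * pe m Y := by
    rw [pe_succ_left, show Y - 1 + 1 = Y by ring]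
  have h3 : pe m (Y-1) * (Y-1+m) = (Y-1) * pe m Y := by
    have := pe_succ m (Y-1)
    rw [h2] at this
    linarith [this]
  have h4 : pe (i+1) (-(2/3)) = pe i (-(2/3)) * ((-(2/3))+i) := pe_succ i _
  have hP : (((i+m+1).choose (i+1) : ℕ) : ℚ)
      = ((i+m).choose i : ℕ) + ((i+m).choose (i+1) : ℕ) := by
    rw [show i+m+1 = (i+m)+1 from rfl, Nat.choose_succ_succ (i+m) i]
    push_cast; ring
  have hc2 : ((m:ℚ)+1) * ((i+m+1).choose i : ℕ) = ((i:ℚ)+m+1) * ((i+m).choose i : ℕ) := by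
    have := hC2 i m
    have := congrArg (fun t : ℕ => (t : ℚ)) this
    push_cast at this
    linarith [this]
  rw [h1, h2, h4, hP]
  linear_combination (-2 * pe i (-(2/3)) * (((i+m).choose i : ℕ):ℚ)) * h3
    + (pe i (-(2/3)) * pe m Y) * hc2

private lemma cert (n i : ℕ) (h : i ≤ n+1) :
    Ff (n+1) i - 2*((-(2/3))+2*(n:ℚ)+1) * Ff n i = gg n (i+1) - gg n i := by
  rcases Nat.lt_or_ge i (n+1) with hi | hi
  · obtain ⟨m, rfl⟩ : ∃ m, n = i + m := ⟨n - i, by omega⟩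
    have := cert_aux i m
    unfold Ff gg
    have s1 : i+m+1-i = m+1 := by omega
    have s2 : i+m-i = m := by omega
    have s3 : i+m+1-(i+1) = m := by omega
    rw [s1, s2, s3]
    push_cast
    push_cast at this
    ring_nf at this ⊢
    try exact this
    try linarith [this]
  · have hi' : i = n+1 := by omega
    subst hi'
    unfold Ff gg
    simp only [Nat.choose_self, Nat.sub_self, pe_zero,
      Nat.choose_succ_self, Nat.choose_eq_zero_of_lt (show n < n+1 by omega),
      Nat.choose_eq_zero_of_lt (show n < n+2 by omega),
      Nat.choose_eq_zero_of_lt (show n+1 < n+2 by omega),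
      show n+1+1-(n+1) = 1 from by omega, show n+1-(n+1+1) = 0 from by omega,
      show n+1+1-(n+1+1) = 0 from by omega]
    push_cast
    ring

private lemma T_rec (n : ℕ) :
    ∑ i ∈ range (n+2), Ff (n+1) i
      = 2*((-(2/3))+2*(n:ℚ)+1) * ∑ i ∈ range (n+2), Ff n i := by
  have tel := Finset.sum_range_sub (gg n) (n+2)
  have e0 : gg n 0 = 0 := by simp [gg]
  have e2 : gg n (n+2) = 0 := by
    unfold gg
    rw [Nat.choose_eq_zero_of_lt (show n < n+2 by omega),
      Nat.choose_eq_zero_of_lt (show n+1 < n+2 by omega)]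
    simp
  have key : ∀ i ∈ range (n+2),
      Ff (n+1) i = 2*((-(2/3))+2*(n:ℚ)+1) * Ff n i + (gg n (i+1) - gg n i) := by
    intro i hi
    simp only [mem_range] at hi
    have := cert n i (by omega)
    linarith [this]
  rw [Finset.sum_congr rfl key, Finset.sum_add_distrib, ← Finset.mul_sum, tel, e0, e2]
  ring

private lemma T_closed (n : ℕ) :
    ∑ i ∈ range (n+1), Ff n i = 4^n * pe n (1/6) := by
  induction n with
  | zero => simp [Ff, pe_zero]
  | succ n ih =>
    have drop : ∑ i ∈ range (n+2), Ff n i = ∑ i ∈ range (n+1), Ff n i := by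
      rw [Finset.sum_range_succ]
      have : Ff n (n+1) = 0 := by
        unfold Ff
        rw [Nat.choose_eq_zero_of_lt (show n < n+1 by omega)]
        simp
      rw [this, add_zero]
    rw [show n+1+1 = n+2 from rfl, T_rec n, drop, ih, pe_succ]
    push_cast
    ring

private lemma dup (n : ℕ) : pe (2*n) (1/3) = 4^n * pe n (1/6) * pe n (2/3) := by
  induction n with
  | zero => simp [pe_zero]
  | succ n ih =>
    rw [show 2*(n+1) = 2*n+1+1 from by ring, pe_succ, pe_succ, ih,
      pe_succ n (1/6), pe_succ n (2/3)]
    push_cast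
    ring

private lemma trip (n : ℕ) : pe (3*n) (1/3) = 27^n * pe n (1/9) * pe n (4/9) * pe n (7/9) := by
  induction n with
  | zero => simp [pe_zero]
  | succ n ih =>
    rw [show 3*(n+1) = 3*n+1+1+1 from by ring, pe_succ, pe_succ, pe_succ, ih,
      pe_succ n (1/9), pe_succ n (4/9), pe_succ n (7/9)]
    push_cast
    ring

private lemma split3 (n : ℕ) : pe (3*n) (1/3) = pe (2*n) (1/3) * pe n ((1:ℚ)/3 + 2*n) := by
  have := pe_add (2*n) n (1/3)
  rw [show 2*n+n = 3*n from by ring] at this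
  rw [this]
  congr 1
  push_cast
  ring

private lemma choose_swap (k i j : ℕ) :
    k.choose i * (k-i).choose j = k.choose j * (k-j).choose i := by
  rcases le_or_gt (i+j) k with h | h
  · have h1 : k.choose (i+j) * (i+j).choose i = k.choose i * (k-i).choose j := by
      have := Nat.choose_mul (n := k) (show i ≤ i+j by omega)
      simpa [Nat.add_sub_cancel_left] using this
    have h2 : k.choose (i+j) * (i+j).choose j = k.choose j * (k-j).choose i := by
      have := Nat.choose_mul (n := k) (show j ≤ i+j by omega)
      have e : i + j - j = i := by omega
      simpa [e] using this
    rw [← h1, ← h2, Nat.choose_symm_add]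
  · rcases le_or_gt i k with hi | hi
    · rcases le_or_gt j k with hj | hj
      · rw [Nat.choose_eq_zero_of_lt (by omega : k - i < j),
          Nat.choose_eq_zero_of_lt (by omega : k - j < i), Nat.mul_zero, Nat.mul_zero]
      · rw [Nat.choose_eq_zero_of_lt (by omega : k - i < j),
          Nat.choose_eq_zero_of_lt (by omega : k < j), Nat.mul_zero, Nat.zero_mul]
    · rw [Nat.choose_eq_zero_of_lt (by omega : k < i)]
      rcases le_or_gt j k with hj | hj
      · rw [Nat.choose_eq_zero_of_lt (by omega : k - j < i), Nat.zero_mul, Nat.mul_zero]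
      · rw [Nat.choose_eq_zero_of_lt (by omega : k < j), Nat.zero_mul, Nat.zero_mul]

private lemma sum_choose_mul (N k j : ℕ) (hk : k ≤ N) :
    ∑ i ∈ range (N+1), k.choose i * (k-i).choose j = k.choose j * 2^(k-j) := by
  have h1 : ∀ i ∈ range (N+1), k.choose i * (k-i).choose j
      = k.choose j * (k-j).choose i := fun i _ => choose_swap k i j
  rw [Finset.sum_congr rfl h1, ← Finset.mul_sum]
  congr 1
  rw [← Nat.sum_range_choose (k-j)]
  symm
  apply Finset.sum_subset
  · intro x hx; simp only [mem_range] at *; omega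
  · intro x _ hx; simp only [mem_range] at hx
    exact Nat.choose_eq_zero_of_lt (by omega)

private lemma stepA (n k : ℕ) (hk : k ≤ 2*n) :
    ∑ j ∈ range (n+1), k.choose j * 2^(k-j) * (2*n-k).choose (n-j)
      = ∑ i ∈ range (2*n+1), k.choose i * (2*n-i).choose n := by
  have key : ∀ i ∈ range (2*n+1), k.choose i * (2*n-i).choose n
      = ∑ j ∈ range (n+1), k.choose i * ((k-i).choose j * (2*n-k).choose (n-j)) := by
    intro i _
    rcases le_or_gt i k with hi | hi
    · have e : 2*n - i = (k-i) + (2*n-k) := by omega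
      rw [e, Nat.add_choose_eq, Finset.Nat.sum_antidiagonal_eq_sum_range_succ_mk,
        Finset.mul_sum]
    · rw [Nat.choose_eq_zero_of_lt hi]
      simp
  rw [Finset.sum_congr rfl key, Finset.sum_comm]
  apply Finset.sum_congr rfl
  intro j _
  have : ∀ i ∈ range (2*n+1), k.choose i * ((k-i).choose j * (2*n-k).choose (n-j))
      = (k.choose i * (k-i).choose j) * (2*n-k).choose (n-j) := by intros; ring
  rw [Finset.sum_congr rfl this, ← Finset.sum_mul, sum_choose_mul (2*n) k j hk]
private lemma sumPoch (a : ℚ) (M : ℕ) :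
    ∑ m ∈ range (M+1), pe m a / (Nat.factorial m : ℚ) = pe M (a+1) / (Nat.factorial M : ℚ) := by
  induction M with
  | zero => simp [pe_zero]
  | succ M ih =>
    rw [Finset.sum_range_succ, ih]
    have hfM : ((Nat.factorial M : ℚ)) ≠ 0 := by positivity
    have hfM1 : ((Nat.factorial (M+1) : ℚ)) ≠ 0 := by positivity
    rw [pe_succ M (a+1), pe_succ_left M a]
    field_simp
    push_cast [Nat.factorial_succ]
    ring

private lemma stepB (a : ℚ) (n : ℕ) : ∀ M : ℕ,
    ∑ m ∈ range (M+1), pe m a / (Nat.factorial m : ℚ) * ((n+M-m).choose n : ℚ)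
      = pe M (a+n+1) / (Nat.factorial M : ℚ) := by
  induction n with
  | zero =>
    intro M
    have : ∀ m ∈ range (M+1), pe m a / (Nat.factorial m : ℚ) * ((0+M-m).choose 0 : ℚ)
        = pe m a / (Nat.factorial m : ℚ) := by intro m _; simp
    rw [Finset.sum_congr rfl this, sumPoch]
    norm_num
  | succ n ih =>
    intro M
    induction M with
    | zero => simp [pe_zero]
    | succ M ihM =>
      push_cast at ihM ⊢
      have split : ∀ m ∈ range (M+2), ((n+1+(M+1)-m).choose (n+1) : ℚ)
          = ((n+1+M-m).choose (n+1) : ℚ) + ((n+1+M-m).choose n : ℚ) := by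
        intro m hm
        simp only [mem_range] at hm
        have e : n+1+(M+1)-m = (n+1+M-m) + 1 := by omega
        rw [e, Nat.choose_succ_succ']
        push_cast
        ring
      calc ∑ m ∈ range (M+2), pe m a / (Nat.factorial m : ℚ) * ((n+1+(M+1)-m).choose (n+1) : ℚ)
          = ∑ m ∈ range (M+2), (pe m a / (Nat.factorial m : ℚ) * ((n+1+M-m).choose (n+1) : ℚ)
            + pe m a / (Nat.factorial m : ℚ) * ((n+(M+1)-m).choose n : ℚ)) := by
            apply Finset.sum_congr rfl
            intro m hm
            rw [split m hm]
            have e2 : n+(M+1)-m = n+1+M-m := by omega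
            rw [e2]; ring
        _ = (∑ m ∈ range (M+2), pe m a / (Nat.factorial m : ℚ) * ((n+1+M-m).choose (n+1) : ℚ))
            + ∑ m ∈ range (M+2), pe m a / (Nat.factorial m : ℚ) * ((n+(M+1)-m).choose n : ℚ) := by
            rw [Finset.sum_add_distrib]
        _ = (∑ m ∈ range (M+1), pe m a / (Nat.factorial m : ℚ) * ((n+1+M-m).choose (n+1) : ℚ))
            + pe (M+1) (a+n+1) / (Nat.factorial (M+1) : ℚ) := by
            rw [ih (M+1), Finset.sum_range_succ]
            have : n+1+M-(M+1) = n := by omega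
            rw [this, Nat.choose_succ_self]
            push_cast; ring
        _ = pe M (a+(n+1)+1) / (Nat.factorial M : ℚ) + pe (M+1) (a+n+1) / (Nat.factorial (M+1) : ℚ) := by
            rw [show (a+((n:ℚ)+1)+1) = a+(n:ℚ)+1+1 by ring] at ihM ⊢
            rw [ihM]
        _ = pe (M+1) (a+(n+1)+1) / (Nat.factorial (M+1) : ℚ) := by
            have hfM : ((Nat.factorial M : ℚ)) ≠ 0 := by positivity
            have hfM1 : ((Nat.factorial (M+1) : ℚ)) ≠ 0 := by positivity
            have e1 : pe (M+1) (a+(n+1)+1) = pe M (a+(n+1)+1) * (a+n+2+M) := by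
              rw [pe_succ]; ring_nf
            have e2 : pe (M+1) (a+n+1) = (a+n+1) * pe M (a+n+2) := by
              rw [pe_succ_left]; ring_nf
            have e3 : pe M (a+(n+1)+1) = pe M (a+n+2) := by ring_nf
            rw [e1, e2, e3]
            field_simp
            push_cast [Nat.factorial_succ]
            ring

private lemma pe_eq (k : ℕ) (x : ℚ) : (ascPochhammer ℚ k).eval x = pe k x := rfl

/-- The diagonal of `(1-x-2y)^{2/3}/(1-x-y-z)` equals
`₃F₂([1/9, 4/9, 7/9], [2/3, 1], 27x)`, stated coefficient-wise. -/
theorem diagonal_1_x_2y_pow_two_thirds (n : ℕ) :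
    ∑ k ∈ range (2 * n + 1), ∑ j ∈ range (n + 1),
        ((ascPochhammer ℚ k).eval (-(2 / 3)) / (Nat.factorial k : ℚ)) *
          (Nat.choose k j : ℚ) * (2 : ℚ) ^ (k - j) *
          (Nat.choose (3 * n - k) n : ℚ) * (Nat.choose (2 * n - k) (n - j) : ℚ) =
    27 ^ n * (ascPochhammer ℚ n).eval (1 / 9) * (ascPochhammer ℚ n).eval (4 / 9) *
        (ascPochhammer ℚ n).eval (7 / 9) /
      ((ascPochhammer ℚ n).eval (2 / 3) * (Nat.factorial n : ℚ) ^ 2) := by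
  simp only [pe_eq]
  have step1 : ∀ k ∈ range (2*n+1),
      ∑ j ∈ range (n+1), (pe k (-(2/3)) / (Nat.factorial k : ℚ)) *
          (Nat.choose k j : ℚ) * (2:ℚ)^(k-j) * (Nat.choose (3*n-k) n : ℚ) *
          (Nat.choose (2*n-k) (n-j) : ℚ)
      = ∑ i ∈ range (2*n+1), (pe k (-(2/3)) / (Nat.factorial k : ℚ)) *
          (Nat.choose k i : ℚ) * (Nat.choose (3*n-k) n : ℚ) * (Nat.choose (2*n-i) n : ℚ) := by
    intro k hk
    simp only [mem_range] at hk
    have hk' : k ≤ 2*n := by omega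
    calc ∑ j ∈ range (n+1), (pe k (-(2/3)) / (Nat.factorial k : ℚ)) *
          (Nat.choose k j : ℚ) * (2:ℚ)^(k-j) * (Nat.choose (3*n-k) n : ℚ) *
          (Nat.choose (2*n-k) (n-j) : ℚ)
        = (pe k (-(2/3)) / (Nat.factorial k : ℚ)) * (Nat.choose (3*n-k) n : ℚ) *
            ((∑ j ∈ range (n+1), Nat.choose k j * 2^(k-j) * Nat.choose (2*n-k) (n-j) : ℕ) : ℚ) := by
          push_cast
          rw [Finset.mul_sum]
          apply Finset.sum_congr rfl
          intro j _
          ring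
      _ = (pe k (-(2/3)) / (Nat.factorial k : ℚ)) * (Nat.choose (3*n-k) n : ℚ) *
            ((∑ i ∈ range (2*n+1), Nat.choose k i * Nat.choose (2*n-i) n : ℕ) : ℚ) := by
          rw [stepA n k hk']
      _ = ∑ i ∈ range (2*n+1), (pe k (-(2/3)) / (Nat.factorial k : ℚ)) *
          (Nat.choose k i : ℚ) * (Nat.choose (3*n-k) n : ℚ) * (Nat.choose (2*n-i) n : ℚ) := by
          push_cast
          rw [Finset.mul_sum]
          apply Finset.sum_congr rfl
          intro i _
          ring
  rw [Finset.sum_congr rfl step1, Finset.sum_comm]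
  have step2 : ∀ i ∈ range (2*n+1),
      ∑ k ∈ range (2*n+1), (pe k (-(2/3)) / (Nat.factorial k : ℚ)) *
          (Nat.choose k i : ℚ) * (Nat.choose (3*n-k) n : ℚ) * (Nat.choose (2*n-i) n : ℚ)
      = (Nat.choose (2*n-i) n : ℚ) * (pe i (-(2/3)) / (Nat.factorial i : ℚ)) *
          (pe (2*n-i) ((-(2/3))+i+n+1) / (Nat.factorial (2*n-i) : ℚ)) := by
    intro i hi
    simp only [mem_range] at hi
    have hi' : i ≤ 2*n := by omega
    calc ∑ k ∈ range (2*n+1), (pe k (-(2/3)) / (Nat.factorial k : ℚ)) *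
          (Nat.choose k i : ℚ) * (Nat.choose (3*n-k) n : ℚ) * (Nat.choose (2*n-i) n : ℚ)
        = (Nat.choose (2*n-i) n : ℚ) * ∑ k ∈ range (2*n+1),
            (pe k (-(2/3)) / (Nat.factorial k : ℚ)) *
            (Nat.choose k i : ℚ) * (Nat.choose (3*n-k) n : ℚ) := by
          rw [Finset.mul_sum]
          exact Finset.sum_congr rfl (fun k _ => by ring)
      _ = (Nat.choose (2*n-i) n : ℚ) * ∑ k ∈ Ico i (2*n+1),
            (pe k (-(2/3)) / (Nat.factorial k : ℚ)) *
            (Nat.choose k i : ℚ) * (Nat.choose (3*n-k) n : ℚ) := by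
          congr 1
          symm
          apply Finset.sum_subset
          · intro x hx; simp only [mem_range, mem_Ico] at *; omega
          · intro x hx hx'
            simp only [mem_range, mem_Ico] at hx hx'
            rw [Nat.choose_eq_zero_of_lt (show x < i by omega)]
            push_cast; ring
      _ = (Nat.choose (2*n-i) n : ℚ) * ((pe i (-(2/3)) / (Nat.factorial i : ℚ)) *
            ∑ m ∈ range (2*n-i+1),
            (pe m ((-(2/3))+i) / (Nat.factorial m : ℚ)) * ((Nat.choose (n+(2*n-i)-m) n : ℕ) : ℚ)) := by
          rw [Finset.sum_Ico_eq_sum_range, show 2*n+1-i = 2*n-i+1 from by omega]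
          congr 1
          rw [Finset.mul_sum]
          apply Finset.sum_congr rfl
          intro m hm
          simp only [mem_range] at hm
          have e1 : 3*n-(i+m) = n+(2*n-i)-m := by omega
          have e2 : pe (i+m) (-(2/3)) = pe i (-(2/3)) * pe m ((-(2/3))+i) :=
            pe_add i m (-(2/3))
          have f1 := Nat.add_choose_mul_factorial_mul_factorial i m
          have fsymm : (i+m).choose i = (i+m).choose m := Nat.choose_symm_add
          rw [← fsymm] at f1
          have f1' : ((Nat.choose (i+m) i : ℕ) : ℚ) * (Nat.factorial i : ℚ) *
              (Nat.factorial m : ℚ) = ((Nat.factorial (i+m) : ℕ) : ℚ) := by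
            exact_mod_cast congrArg (fun t : ℕ => (t:ℚ)) f1
          have hfi : ((Nat.factorial i : ℚ)) ≠ 0 := by positivity
          have hfm : ((Nat.factorial m : ℚ)) ≠ 0 := by positivity
          have hfim : ((Nat.factorial (i+m) : ℚ)) ≠ 0 := by positivity
          have hq : ((Nat.choose (i+m) i : ℕ):ℚ) / ((Nat.factorial (i+m) : ℕ) : ℚ)
              = 1/((Nat.factorial i : ℚ) * (Nat.factorial m : ℚ)) := by
            rw [div_eq_div_iff hfim (by positivity)]
            linear_combination f1'
          rw [e1, e2]
          calc pe i (-(2/3)) * pe m ((-(2/3))+i) / ↑(Nat.factorial (i+m)) *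
                ↑(Nat.choose (i+m) i) * ↑(Nat.choose (n+(2*n-i)-m) n)
              = (((Nat.choose (i+m) i : ℕ):ℚ) / ((Nat.factorial (i+m) : ℕ) : ℚ)) *
                (pe i (-(2/3)) * pe m ((-(2/3))+i) * ↑(Nat.choose (n+(2*n-i)-m) n)) := by
                ring
            _ = (1/((Nat.factorial i : ℚ) * (Nat.factorial m : ℚ))) *
                (pe i (-(2/3)) * pe m ((-(2/3))+i) * ↑(Nat.choose (n+(2*n-i)-m) n)) := by
                rw [hq]
            _ = pe i (-(2/3)) / ↑(Nat.factorial i) *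
                (pe m ((-(2/3))+i) / ↑(Nat.factorial m) * ↑(Nat.choose (n+(2*n-i)-m) n)) := by
                ring
      _ = (Nat.choose (2*n-i) n : ℚ) * ((pe i (-(2/3)) / (Nat.factorial i : ℚ)) *
            (pe (2*n-i) (((-(2/3))+(i:ℚ))+n+1) / (Nat.factorial (2*n-i) : ℚ))) := by
          rw [stepB ((-(2/3))+(i:ℚ)) n (2*n-i)]
      _ = (Nat.choose (2*n-i) n : ℚ) * (pe i (-(2/3)) / (Nat.factorial i : ℚ)) *
          (pe (2*n-i) ((-(2/3))+i+n+1) / (Nat.factorial (2*n-i) : ℚ)) := by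
          ring
  rw [Finset.sum_congr rfl step2]
  have step3 : ∑ i ∈ range (2*n+1), (Nat.choose (2*n-i) n : ℚ) *
        (pe i (-(2/3)) / (Nat.factorial i : ℚ)) *
        (pe (2*n-i) ((-(2/3))+i+n+1) / (Nat.factorial (2*n-i) : ℚ))
      = ∑ i ∈ range (n+1), (Nat.choose (2*n-i) n : ℚ) *
        (pe i (-(2/3)) / (Nat.factorial i : ℚ)) *
        (pe (2*n-i) ((-(2/3))+i+n+1) / (Nat.factorial (2*n-i) : ℚ)) := by
    symm
    apply Finset.sum_subset
    · intro x hx; simp only [mem_range] at *; omega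
    · intro x hx hx'
      simp only [mem_range] at hx hx'
      rw [Nat.choose_eq_zero_of_lt (show 2*n-x < n by omega)]
      push_cast
      ring
  rw [step3]
  have step4 : ∀ i ∈ range (n+1), (Nat.choose (2*n-i) n : ℚ) *
        (pe i (-(2/3)) / (Nat.factorial i : ℚ)) *
        (pe (2*n-i) ((-(2/3))+i+n+1) / (Nat.factorial (2*n-i) : ℚ))
      = (pe n ((1:ℚ)/3 + 2*n) / ((Nat.factorial n : ℚ))^2) * Ff n i := by
    intro i hi
    simp only [mem_range] at hi
    have hi' : i ≤ n := by omega
    have e1 : pe (2*n-i) ((-(2/3))+(i:ℚ)+n+1)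
        = pe (n-i) ((-(2/3))+(i:ℚ)+n+1) * pe n ((1:ℚ)/3 + 2*n) := by
      have h := pe_add (n-i) n ((-(2/3))+(i:ℚ)+n+1)
      rw [show (n-i)+n = 2*n-i from by omega] at h
      rw [h]
      congr 1
      push_cast [Nat.cast_sub hi']
      ring
    have f1 := Nat.add_choose_mul_factorial_mul_factorial n (n-i)
    rw [show n+(n-i) = 2*n-i from by omega] at f1
    have fsymm : (2*n-i).choose (n-i) = (2*n-i).choose n := by
      rw [show n-i = 2*n-i-n from by omega]
      exact Nat.choose_symm (by omega)
    rw [fsymm] at f1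
    have f1c : ((Nat.choose (2*n-i) n : ℕ):ℚ) * (Nat.factorial n : ℚ) *
        ((Nat.factorial (n-i) : ℕ):ℚ) = ((Nat.factorial (2*n-i) : ℕ):ℚ) := by
      exact_mod_cast congrArg (fun t : ℕ => (t:ℚ)) f1
    have f2 := Nat.choose_mul_factorial_mul_factorial hi'
    have f2c : ((Nat.choose n i : ℕ):ℚ) * (Nat.factorial i : ℚ) *
        ((Nat.factorial (n-i) : ℕ):ℚ) = ((Nat.factorial n : ℕ):ℚ) := by
      exact_mod_cast congrArg (fun t : ℕ => (t:ℚ)) f2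
    have hfi : ((Nat.factorial i : ℚ)) ≠ 0 := by positivity
    have hfn : ((Nat.factorial n : ℚ)) ≠ 0 := by positivity
    have hfni : ((Nat.factorial (n-i) : ℚ)) ≠ 0 := by positivity
    have hfni2 : ((Nat.factorial (2*n-i) : ℚ)) ≠ 0 := by positivity
    have eA : ((Nat.choose (2*n-i) n : ℕ):ℚ)
        = ((Nat.factorial (2*n-i) : ℕ):ℚ) / ((Nat.factorial n : ℚ) * (Nat.factorial (n-i) : ℚ)) := by
      rw [eq_div_iff (by positivity)]
      linear_combination f1c
    have eB : ((Nat.choose n i : ℕ):ℚ)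
        = ((Nat.factorial n : ℕ):ℚ) / ((Nat.factorial i : ℚ) * (Nat.factorial (n-i) : ℚ)) := by
      rw [eq_div_iff (by positivity)]
      linear_combination f2c
    unfold Ff
    rw [show ((n:ℚ)+1+(-(2/3))+(i:ℚ)) = (-(2/3))+(i:ℚ)+n+1 from by ring]
    rw [e1, eA, eB]
    field_simp
  rw [Finset.sum_congr rfl step4, ← Finset.mul_sum, T_closed]
  have hpe23 : pe n (2/3) ≠ 0 := ne_of_gt (pe_pos (by norm_num) n)
  have hfn : ((Nat.factorial n : ℚ)) ≠ 0 := by positivity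
  have key : pe n ((1:ℚ)/3 + 2*n) * (4^n * pe n (1/6)) * pe n (2/3)
      = 27^n * pe n (1/9) * pe n (4/9) * pe n (7/9) := by
    rw [← trip, split3, dup]
    ring
  rw [div_mul_eq_mul_div, div_eq_div_iff (by positivity) (by
    have := pe_pos (show (0:ℚ) < 2/3 by norm_num) n
    positivity)]
  linear_combination ((Nat.factorial n : ℚ))^2 * key
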